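/- For all m ≥ 0 and n ≥ 1, d_m(n)/n! equals the coefficient of x^n in the formal power series exp(x) · (exp(2x) − 1)^m ∈ ℚ[[x]], where exp(cx) = Σ_{k≥0} c^k x^k / k!. -/

import Mathlib

/-- The set `𝓑` of nonempty subsets `B` of `{-n, …, -1, 1, …, n}` such that for no
`i ∈ {1, …, n}` both `i` and `-i` belong to `B`. -/
def calB (n : ℕ) : Set (Finset ℤ) :=
  {B | B.Nonempty ∧ (∀ z ∈ B, z ≠ 0 ∧ |z| ≤ (n : ℤ)) ∧
    ∀ i : ℤ, 1 ≤ i → i ≤ (n : ℤ) → ¬(i ∈ B ∧ -i ∈ B)}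

/-- `d_m(n)`: the number of chains `B^{(m)} ⊊ ⋯ ⊊ B^{(1)}` of `m` elements of `𝓑`
(the number of `m`-dimensional cones of the fan `Σ(B_n)`); `d_0(n) = 1`. -/
noncomputable def dB (n m : ℕ) : ℕ :=
  Set.ncard {c : Fin m → Finset ℤ |
    (∀ k l : Fin m, k < l → c l ⊂ c k) ∧ ∀ k, c k ∈ calB n}

open Finset PowerSeries

def pZ {n : ℕ} (p : Fin n × Bool) : ℤ :=
  if p.2 then ((p.1 : ℕ) : ℤ) + 1 else -(((p.1 : ℕ) : ℤ) + 1)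

lemma pZ_injective {n : ℕ} : Function.Injective (pZ (n := n)) := by
  rintro ⟨i, bi⟩ ⟨j, bj⟩ h
  have hi : (0:ℤ) ≤ ((i : ℕ) : ℤ) := Int.ofNat_nonneg _
  have hj : (0:ℤ) ≤ ((j : ℕ) : ℤ) := Int.ofNat_nonneg _
  cases bi <;> cases bj <;> simp only [pZ] at h <;> simp at h ⊢
  · exact Fin.ext (by exact_mod_cast (by omega : ((i:ℕ):ℤ) = ((j:ℕ):ℤ)))
  · omega
  · omega
  · exact Fin.ext (by exact_mod_cast (by omega : ((i:ℕ):ℤ) = ((j:ℕ):ℤ)))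

lemma pZ_abs {n : ℕ} (p : Fin n × Bool) : |pZ p| = ((p.1 : ℕ) : ℤ) + 1 := by
  rcases p with ⟨i, b⟩
  have h0 : (0:ℤ) ≤ ((i:ℕ):ℤ) := Int.ofNat_nonneg _
  cases b
  · show |(-(((i:ℕ):ℤ)+1))| = _
    rw [abs_neg, abs_of_nonneg (by omega)]
  · show |((i:ℕ):ℤ)+1| = _
    rw [abs_of_nonneg (by omega)]

lemma pZ_ne_zero {n : ℕ} (p : Fin n × Bool) : pZ p ≠ 0 := by
  intro h
  have h2 := pZ_abs p
  have h3 : (0:ℤ) ≤ ((p.1:ℕ):ℤ) := Int.ofNat_nonneg _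
  rw [h] at h2; simp at h2; omega

lemma pZ_le {n : ℕ} (p : Fin n × Bool) : |pZ p| ≤ (n : ℤ) := by
  rw [pZ_abs]
  have : ((p.1:ℕ):ℤ) < (n:ℤ) := by exact_mod_cast p.1.2
  omega

def chainOf {n m : ℕ} (h : Fin n → Option (Fin m × Bool)) : Fin m → Finset ℤ :=
  fun j => (Finset.univ.filter
    (fun p : Fin n × Bool => ∃ j' : Fin m, j ≤ j' ∧ h p.1 = some (j', p.2))).image pZ

lemma mem_chainOf {n m : ℕ} {h : Fin n → Option (Fin m × Bool)} {j : Fin m} {z : ℤ} :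
    z ∈ chainOf h j ↔ ∃ p : Fin n × Bool, (∃ j' : Fin m, j ≤ j' ∧ h p.1 = some (j', p.2))
      ∧ pZ p = z := by
  simp only [chainOf, Finset.mem_image, Finset.mem_filter, Finset.mem_univ, true_and]

lemma chainOf_spec {n m : ℕ} {h : Fin n → Option (Fin m × Bool)}
    (hh : ∀ j : Fin m, ∃ i b, h i = some (j, b)) :
    (∀ k l : Fin m, k < l → chainOf h l ⊂ chainOf h k) ∧ ∀ k, chainOf h k ∈ calB n := by
  have hsub : ∀ k l : Fin m, k ≤ l → chainOf h l ⊆ chainOf h k := by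
    intro k l hkl z hz
    rw [mem_chainOf] at hz ⊢
    obtain ⟨p, ⟨j', hj', hp⟩, hpz⟩ := hz
    exact ⟨p, ⟨j', le_trans hkl hj', hp⟩, hpz⟩
  have hwit : ∀ k : Fin m, ∃ p : Fin n × Bool, h p.1 = some (k, p.2) := by
    intro k; obtain ⟨i, b, hib⟩ := hh k; exact ⟨(i, b), hib⟩
  have hnotmem : ∀ k l : Fin m, k < l → ∀ p : Fin n × Bool, h p.1 = some (k, p.2) →
      pZ p ∉ chainOf h l := by
    intro k l hkl p hp hmem
    rw [mem_chainOf] at hmem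
    obtain ⟨q, ⟨j', hj', hq⟩, hqz⟩ := hmem
    have : q = p := pZ_injective hqz
    subst this
    rw [hp] at hq
    obtain ⟨h1, -⟩ := Prod.mk.injEq .. ▸ (Option.some_injective _ hq)
    exact absurd (h1 ▸ hj') (not_le.2 hkl)
  constructor
  · intro k l hkl
    rw [Finset.ssubset_iff_of_subset (hsub k l (le_of_lt hkl))]
    obtain ⟨p, hp⟩ := hwit k
    exact ⟨pZ p, mem_chainOf.2 ⟨p, ⟨k, le_refl k, hp⟩, rfl⟩, hnotmem k l hkl p hp⟩
  · intro k
    refine ⟨?_, ?_, ?_⟩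
    · obtain ⟨p, hp⟩ := hwit k
      exact ⟨pZ p, mem_chainOf.2 ⟨p, ⟨k, le_refl k, hp⟩, rfl⟩⟩
    · intro z hz
      obtain ⟨p, -, hpz⟩ := mem_chainOf.1 hz
      exact hpz ▸ ⟨pZ_ne_zero p, pZ_le p⟩
    · rintro i hi1 hin ⟨hpos, hneg⟩
      obtain ⟨p, ⟨jp, hjp, hp⟩, hpz⟩ := mem_chainOf.1 hpos
      obtain ⟨q, ⟨jq, hjq, hq⟩, hqz⟩ := mem_chainOf.1 hneg
      -- p = (i0, true), q = (i0, false) with same i0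
      have hpb : p.2 = true := by
        by_contra hb
        have hb' : p.2 = false := by simpa using hb
        have : pZ p = -(((p.1:ℕ):ℤ) + 1) := by
          rcases p with ⟨a, pb⟩; simp only at hb'; rw [hb']; rfl
        rw [this] at hpz
        have := Int.ofNat_nonneg (p.1 : ℕ)
        omega
      have hqb : q.2 = false := by
        by_contra hb
        have hb' : q.2 = true := by simpa using hb
        have : pZ q = (((q.1:ℕ):ℤ) + 1) := by
          rcases q with ⟨a, qb⟩; simp only at hb'; rw [hb']; rfl
        rw [this] at hqz
        have := Int.ofNat_nonneg (q.1 : ℕ)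
        omega
      have htp : pZ p = ((p.1:ℕ):ℤ) + 1 := by
        rcases p with ⟨a, pb⟩; simp only at hpb; rw [hpb]; rfl
      have htq : pZ q = -(((q.1:ℕ):ℤ) + 1) := by
        rcases q with ⟨a, qb⟩; simp only at hqb; rw [hqb]; rfl
      have h1 : ((p.1:ℕ):ℤ) = ((q.1:ℕ):ℤ) := by omega
      have : p.1 = q.1 := Fin.ext (by exact_mod_cast h1)
      rw [this] at hp
      rw [hq] at hp
      obtain ⟨-, h2⟩ := Prod.mk.injEq .. ▸ (Option.some_injective _ hp)
      rw [hpb, hqb] at h2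
      exact absurd h2 (by simp)

lemma pZ_true {n : ℕ} (i : Fin n) : pZ (i, true) = ((i:ℕ):ℤ) + 1 := rfl
lemma pZ_false {n : ℕ} (i : Fin n) : pZ (i, false) = -(((i:ℕ):ℤ) + 1) := rfl

lemma mem_chainOf_pos {n m : ℕ} {h : Fin n → Option (Fin m × Bool)} {j : Fin m} {i : Fin n} :
    (((i:ℕ):ℤ) + 1) ∈ chainOf h j ↔ ∃ j', j ≤ j' ∧ h i = some (j', true) := by
  rw [mem_chainOf]
  constructor
  · rintro ⟨p, ⟨j', hle, hp⟩, hpz⟩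
    have hp' : p = (i, true) := pZ_injective (by rw [hpz, pZ_true])
    subst hp'
    exact ⟨j', hle, hp⟩
  · rintro ⟨j', hle, hi⟩
    exact ⟨(i, true), ⟨j', hle, hi⟩, rfl⟩

lemma mem_chainOf_neg {n m : ℕ} {h : Fin n → Option (Fin m × Bool)} {j : Fin m} {i : Fin n} :
    (-(((i:ℕ):ℤ) + 1)) ∈ chainOf h j ↔ ∃ j', j ≤ j' ∧ h i = some (j', false) := by
  rw [mem_chainOf]
  constructor
  · rintro ⟨p, ⟨j', hle, hp⟩, hpz⟩
    have hp' : p = (i, false) := pZ_injective (by rw [hpz, pZ_false])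
    subst hp'
    exact ⟨j', hle, hp⟩
  · rintro ⟨j', hle, hi⟩
    exact ⟨(i, false), ⟨j', hle, hi⟩, rfl⟩

def levelSetAt {n m : ℕ} (c : Fin m → Finset ℤ) (i : Fin n) : Finset (Fin m) :=
  Finset.univ.filter (fun j => (((i:ℕ):ℤ) + 1) ∈ c j ∨ (-(((i:ℕ):ℤ) + 1)) ∈ c j)

lemma mem_levelSetAt {n m : ℕ} {c : Fin m → Finset ℤ} {i : Fin n} {j : Fin m} :
    j ∈ levelSetAt c i ↔ (((i:ℕ):ℤ) + 1) ∈ c j ∨ (-(((i:ℕ):ℤ) + 1)) ∈ c j := by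
  simp only [levelSetAt, Finset.mem_filter, Finset.mem_univ, true_and]

def levelOf {n m : ℕ} (c : Fin m → Finset ℤ) : Fin n → Option (Fin m × Bool) := fun i =>
  if hne : (levelSetAt c i).Nonempty
  then some ((levelSetAt c i).max' hne,
             decide ((((i:ℕ):ℤ) + 1) ∈ c ((levelSetAt c i).max' hne)))
  else none

section withChain

variable {n m : ℕ} {c : Fin m → Finset ℤ}
  (hc : (∀ k l : Fin m, k < l → c l ⊂ c k) ∧ ∀ k, c k ∈ calB n)

include hc

lemma chain_anti {k l : Fin m} (hkl : k ≤ l) : c l ⊆ c k := by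
  rcases lt_or_eq_of_le hkl with h | h
  · exact (hc.1 k l h).subset
  · rw [h]

lemma chain_signfree (k : Fin m) (i : Fin n) :
    ¬((((i:ℕ):ℤ) + 1) ∈ c k ∧ (-(((i:ℕ):ℤ) + 1)) ∈ c k) := by
  have h0 : (0:ℤ) ≤ ((i:ℕ):ℤ) := Int.ofNat_nonneg _
  have h1 : ((i:ℕ):ℤ) < (n:ℤ) := by exact_mod_cast i.2
  exact (hc.2 k).2.2 (((i:ℕ):ℤ) + 1) (by omega) (by omega)

lemma exists_idx {z : ℤ} {k : Fin m} (hz : z ∈ c k) :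
    ∃ i : Fin n, ((i:ℕ):ℤ) + 1 = |z| := by
  obtain ⟨hz0, hzn⟩ := (hc.2 k).2.1 z hz
  have ha1 : 1 ≤ z.natAbs := by
    rcases Nat.eq_zero_or_pos z.natAbs with h | h
    · exact absurd (Int.natAbs_eq_zero.1 h) hz0
    · exact h
  have ha2 : z.natAbs ≤ n := by
    rw [Int.abs_eq_natAbs] at hzn
    exact_mod_cast hzn
  refine ⟨⟨z.natAbs - 1, by omega⟩, ?_⟩
  show ((z.natAbs - 1 : ℕ) : ℤ) + 1 = |z|
  rw [Int.abs_eq_natAbs]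
  omega

lemma levelOf_good : ∀ j : Fin m, ∃ (i : Fin n) (b : Bool), levelOf c i = some (j, b) := by
  intro j
  -- find z ∈ c j not in any c j' for j' > j
  have hzex : ∃ z, z ∈ c j ∧ ∀ j' : Fin m, j < j' → z ∉ c j' := by
    by_cases hjt : (j:ℕ) + 1 < m
    · obtain ⟨z, hzj, hzj1⟩ := Finset.exists_of_ssubset
        (hc.1 j ⟨(j:ℕ)+1, hjt⟩ (by rw [Fin.lt_def]; simp))
      refine ⟨z, hzj, fun j' hjj' hmem => hzj1 ?_⟩
      have : (⟨(j:ℕ)+1, hjt⟩ : Fin m) ≤ j' := by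
        rw [Fin.le_def]
        simp only
        rw [Fin.lt_def] at hjj'
        omega
      exact chain_anti hc this hmem
    · obtain ⟨z, hz⟩ := (hc.2 j).1
      refine ⟨z, hz, fun j' hjj' => absurd hjj' ?_⟩
      rw [Fin.lt_def]
      have := j'.2
      omega
  obtain ⟨z, hzj, hzno⟩ := hzex
  obtain ⟨i, hiz⟩ := exists_idx hc hzj
  have hzcases : z = ((i:ℕ):ℤ) + 1 ∨ z = -(((i:ℕ):ℤ) + 1) := by
    rcases abs_choice z with h | h <;> omega
  have hjmem : j ∈ levelSetAt c i := by
    rw [mem_levelSetAt]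
    rcases hzcases with h | h
    · exact Or.inl (h ▸ hzj)
    · exact Or.inr (h ▸ hzj)
  have hne : (levelSetAt c i).Nonempty := ⟨j, hjmem⟩
  have hJle : j ≤ (levelSetAt c i).max' hne := Finset.le_max' _ j hjmem
  have hJeq : (levelSetAt c i).max' hne = j := by
    by_contra hJne
    have hJgt : j < (levelSetAt c i).max' hne := lt_of_le_of_ne hJle (Ne.symm hJne)
    have hJmem := Finset.max'_mem (levelSetAt c i) hne
    rw [mem_levelSetAt] at hJmem
    have hJsub : c ((levelSetAt c i).max' hne) ⊆ c j := chain_anti hc (le_of_lt hJgt)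
    rcases hJmem with hpos | hneg
    · rcases hzcases with h | h
      · exact hzno _ hJgt (h ▸ hpos)
      · exact chain_signfree hc j i ⟨hJsub hpos, h ▸ hzj⟩
    · rcases hzcases with h | h
      · exact chain_signfree hc j i ⟨h ▸ hzj, hJsub hneg⟩
      · exact hzno _ hJgt (h ▸ hneg)
  refine ⟨i, decide ((((i:ℕ):ℤ) + 1) ∈ c j), ?_⟩
  simp only [levelOf]
  rw [dif_pos hne, hJeq]

lemma chainOf_levelOf : chainOf (levelOf (n := n) c) = c := by
  funext j
  ext z
  constructor
  · intro hz
    rw [mem_chainOf] at hz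
    obtain ⟨p, ⟨j', hle, hp⟩, hpz⟩ := hz
    simp only [levelOf] at hp
    by_cases hne : (levelSetAt c p.1).Nonempty
    · rw [dif_pos hne] at hp
      obtain ⟨h1, h2⟩ := Prod.mk.injEq .. ▸ (Option.some_injective _ hp)
      have hJmem := Finset.max'_mem (levelSetAt c p.1) hne
      rw [mem_levelSetAt] at hJmem
      have hsub : c ((levelSetAt c p.1).max' hne) ⊆ c j := by
        apply chain_anti hc
        rw [← h1] at hle
        exact hle
      cases hb : p.2 with
      | true =>
        have hmem : (((p.1:ℕ):ℤ) + 1) ∈ c ((levelSetAt c p.1).max' hne) := by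
          rw [hb] at h2
          exact of_decide_eq_true h2
        have : pZ p = ((p.1:ℕ):ℤ) + 1 := by
          rcases p with ⟨a, b⟩; simp only at hb; rw [hb]; rfl
        rw [← hpz, this]
        exact hsub hmem
      | false =>
        have hnotmem : ¬(((p.1:ℕ):ℤ) + 1) ∈ c ((levelSetAt c p.1).max' hne) := by
          rw [hb] at h2
          exact of_decide_eq_false h2
        have hmem : (-(((p.1:ℕ):ℤ) + 1)) ∈ c ((levelSetAt c p.1).max' hne) := by
          rcases hJmem with h | h
          · exact absurd h hnotmem
          · exact h
        have : pZ p = -(((p.1:ℕ):ℤ) + 1) := by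
          rcases p with ⟨a, b⟩; simp only at hb; rw [hb]; rfl
        rw [← hpz, this]
        exact hsub hmem
    · rw [dif_neg hne] at hp
      exact absurd hp (by simp)
  · intro hz
    obtain ⟨i, hiz⟩ := exists_idx hc hz
    have hzcases : z = ((i:ℕ):ℤ) + 1 ∨ z = -(((i:ℕ):ℤ) + 1) := by
      rcases abs_choice z with h | h <;> omega
    have hjmem : j ∈ levelSetAt c i := by
      rw [mem_levelSetAt]
      rcases hzcases with h | h
      · exact Or.inl (h ▸ hz)
      · exact Or.inr (h ▸ hz)
    have hne : (levelSetAt c i).Nonempty := ⟨j, hjmem⟩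
    set J := (levelSetAt c i).max' hne with hJ
    have hjJ : j ≤ J := Finset.le_max' _ j hjmem
    have hJmem := Finset.max'_mem (levelSetAt c i) hne
    rw [mem_levelSetAt] at hJmem
    have hJsub : c J ⊆ c j := chain_anti hc hjJ
    rw [mem_chainOf]
    rcases hzcases with hzc | hzc
    · -- z = i+1 : positive
      have hbmem : (((i:ℕ):ℤ) + 1) ∈ c J := by
        rcases hJmem with h | h
        · exact h
        · exact absurd ⟨hzc ▸ hz, hJsub h⟩ (chain_signfree hc j i)
      refine ⟨(i, true), ⟨J, hjJ, ?_⟩, by rw [pZ_true, hzc]⟩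
      simp only [levelOf]
      rw [dif_pos hne, decide_eq_true hbmem]
    · -- z = -(i+1) : negative
      have hbnot : ¬(((i:ℕ):ℤ) + 1) ∈ c J := by
        intro h
        exact absurd ⟨hJsub h, hzc ▸ hz⟩ (chain_signfree hc j i)
      have hbmem : (-(((i:ℕ):ℤ) + 1)) ∈ c J := by
        rcases hJmem with h | h
        · exact absurd h hbnot
        · exact h
      refine ⟨(i, false), ⟨J, hjJ, ?_⟩, by rw [pZ_false, hzc]⟩
      simp only [levelOf]
      rw [dif_pos hne, decide_eq_false hbnot]

end withChain

lemma levelOf_chainOf {n m : ℕ} (h : Fin n → Option (Fin m × Bool)) :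
    levelOf (chainOf h) = h := by
  funext i
  have hS : ∀ j : Fin m, j ∈ levelSetAt (chainOf h) i ↔
      ∃ j' b, j ≤ j' ∧ h i = some (j', b) := by
    intro j
    rw [mem_levelSetAt, mem_chainOf_pos, mem_chainOf_neg]
    constructor
    · rintro (⟨j', hle, hi⟩ | ⟨j', hle, hi⟩)
      · exact ⟨j', true, hle, hi⟩
      · exact ⟨j', false, hle, hi⟩
    · rintro ⟨j', b, hle, hi⟩
      cases b
      · exact Or.inr ⟨j', hle, hi⟩
      · exact Or.inl ⟨j', hle, hi⟩
  cases hi : h i with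
  | none =>
    simp only [levelOf]
    rw [dif_neg]
    rintro ⟨j, hj⟩
    obtain ⟨j', b, -, hib⟩ := (hS j).1 hj
    rw [hi] at hib
    exact absurd hib (by simp)
  | some v =>
    obtain ⟨j0, b⟩ := v
    have hne : (levelSetAt (chainOf h) i).Nonempty :=
      ⟨j0, (hS j0).2 ⟨j0, b, le_refl j0, hi⟩⟩
    set J := (levelSetAt (chainOf h) i).max' hne with hJdef
    have hJeq : J = j0 := by
      apply le_antisymm
      · obtain ⟨j', b', hle, hib⟩ := (hS J).1 (Finset.max'_mem _ hne)
        rw [hi] at hib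
        obtain ⟨h1, -⟩ := Prod.mk.injEq .. ▸ (Option.some_injective _ hib)
        exact h1 ▸ hle
      · exact Finset.le_max' _ j0 ((hS j0).2 ⟨j0, b, le_refl j0, hi⟩)
    have hdec : decide ((((i:ℕ):ℤ) + 1) ∈ chainOf h J) = b := by
      have hiff : (((i:ℕ):ℤ) + 1) ∈ chainOf h J ↔ b = true := by
        rw [mem_chainOf_pos]
        constructor
        · rintro ⟨j', hle, hib⟩
          rw [hi] at hib
          obtain ⟨-, h2⟩ := Prod.mk.injEq .. ▸ (Option.some_injective _ hib)
          exact h2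
        · intro hb
          exact ⟨j0, le_of_eq hJeq, by rw [hi, hb]⟩
      cases b
      · simp only [decide_eq_false_iff_not]
        intro hmem
        exact absurd (hiff.1 hmem) (by simp)
      · exact decide_eq_true (hiff.2 rfl)
    simp only [levelOf]
    rw [dif_pos hne, ← hJdef]
    rw [hJeq] at hdec ⊢
    rw [hdec]

noncomputable def mainEquiv (n m : ℕ) :
    {c : Fin m → Finset ℤ // (∀ k l : Fin m, k < l → c l ⊂ c k) ∧ ∀ k, c k ∈ calB n} ≃
    {h : Fin n → Option (Fin m × Bool) // ∀ j : Fin m, ∃ i b, h i = some (j, b)} where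
  toFun := fun ⟨c, hc⟩ => ⟨levelOf c, levelOf_good hc⟩
  invFun := fun ⟨h, hh⟩ => ⟨chainOf h, chainOf_spec hh⟩
  left_inv := fun ⟨c, hc⟩ => Subtype.ext (chainOf_levelOf hc)
  right_inv := fun ⟨h, hh⟩ => Subtype.ext (levelOf_chainOf h)

lemma pmap_eq_some_of {α β : Type*} {p : α → Prop} (f : ∀ a, p a → β) (o : Option α)
    (H : ∀ a ∈ o, p a) (a : α) (ha : o = some a) :
    Option.pmap f o H = some (f a (H a (by rw [ha]; rfl))) := by
  subst ha; rfl

def levelSet {n m : ℕ} (h : Fin n → Option (Fin m × Bool)) : Finset (Fin m) :=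
  Finset.univ.filter (fun j => ∃ i b, h i = some (j, b))

noncomputable def NL (n m : ℕ) : ℕ :=
  Nat.card {h : Fin n → Option (Fin m × Bool) // ∀ j, ∃ i b, h i = some (j, b)}

noncomputable def restrictEquiv (n m : ℕ) (S : Finset (Fin m)) :
    {h : Fin n → Option (Fin m × Bool) // levelSet h = S} ≃
    {h : Fin n → Option (Fin S.card × Bool) // ∀ j, ∃ i b, h i = some (j, b)} where
  toFun := fun ⟨h, hS⟩ => ⟨fun i => Option.pmap
      (fun p (hp : p.1 ∈ S) => (S.equivFin ⟨p.1, hp⟩, p.2)) (h i)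
      (fun p hp => by
        rw [← hS]
        simp only [levelSet, Finset.mem_filter, Finset.mem_univ, true_and]
        exact ⟨i, p.2, by rw [hp]⟩),
    by
      intro q
      have hmem : (S.equivFin.symm q : Fin m) ∈ levelSet h := by
        rw [hS]; exact (S.equivFin.symm q).2
      simp only [levelSet, Finset.mem_filter, Finset.mem_univ, true_and] at hmem
      obtain ⟨i, b, hib⟩ := hmem
      refine ⟨i, b, (pmap_eq_some_of _ _ _ ((S.equivFin.symm q : Fin m), b) hib).trans ?_⟩
      congr 1
      refine Prod.ext ?_ rfl
      show S.equivFin ⟨(S.equivFin.symm q : Fin m), _⟩ = q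
      rw [Subtype.coe_eta, Equiv.apply_symm_apply]⟩
  invFun := fun ⟨h, hh⟩ => ⟨fun i => (h i).map (fun q => ((S.equivFin.symm q.1 : Fin m), q.2)),
    by
      ext j
      simp only [levelSet, Finset.mem_filter, Finset.mem_univ, true_and]
      constructor
      · rintro ⟨i, b, hib⟩
        cases hi : h i with
        | none => rw [hi] at hib; simp at hib
        | some q =>
          rw [hi] at hib
          simp only [Option.map_some] at hib
          obtain ⟨h1, h2⟩ := Prod.mk.injEq .. ▸ (Option.some_injective _ hib)
          exact h1 ▸ (S.equivFin.symm q.1).2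
      · intro hj
        obtain ⟨i, b, hib⟩ := hh (S.equivFin ⟨j, hj⟩)
        exact ⟨i, b, by rw [hib]; simp⟩⟩
  left_inv := fun ⟨h, hS⟩ => by
    apply Subtype.ext
    funext i
    simp only
    rw [Option.map_pmap]
    have : (fun (p : Fin m × Bool) (hp : p.1 ∈ S) =>
        (fun q : Fin S.card × Bool => ((S.equivFin.symm q.1 : Fin m), q.2))
          ((S.equivFin ⟨p.1, hp⟩, p.2))) = fun p _ => p := by
      funext p hp
      refine Prod.ext ?_ rfl
      show (S.equivFin.symm (S.equivFin ⟨p.1, hp⟩) : Fin m) = p.1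
      rw [Equiv.symm_apply_apply]
    rw [this, Option.pmap_eq_map]
    simp
  right_inv := fun ⟨h, hh⟩ => by
    apply Subtype.ext
    funext i
    simp only
    rw [Option.pmap_map]
    have : (fun (q : Fin S.card × Bool)
        (hq : ((fun q : Fin S.card × Bool => ((S.equivFin.symm q.1 : Fin m), q.2)) q).1 ∈ S) =>
        (S.equivFin ⟨((S.equivFin.symm q.1 : Fin m)), hq⟩, q.2)) = fun q _ => q := by
      funext q hq
      refine Prod.ext ?_ rfl
      show S.equivFin ⟨(S.equivFin.symm q.1 : Fin m), hq⟩ = q.1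
      rw [Subtype.coe_eta, Equiv.apply_symm_apply]
    rw [this, Option.pmap_eq_map]
    simp

lemma sumNL (n m : ℕ) :
    ∑ j ∈ Finset.range (m+1), m.choose j * NL n j = (2*m+1)^n := by
  classical
  have h2 : ∀ S : Finset (Fin m),
      ((Finset.univ : Finset (Fin n → Option (Fin m × Bool))).filter
        (fun h => levelSet h = S)).card = NL n S.card := by
    intro S
    rw [← Fintype.card_subtype, ← Nat.card_eq_fintype_card,
      Nat.card_congr (restrictEquiv n m S), NL]
  have h1 : (2*m+1)^n
      = ∑ S ∈ (Finset.univ : Finset (Fin m)).powerset, NL n S.card := by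
    rw [← Finset.sum_congr rfl (fun S _ => h2 S),
      ← Finset.card_eq_sum_card_fiberwise (fun h _ => Finset.mem_powerset.2 (Finset.subset_univ _)),
      Finset.card_univ, Fintype.card_fun]
    simp [Fintype.card_option, Fintype.card_prod, Nat.mul_comm]
  rw [h1, Finset.sum_powerset _ (fun S => NL n S.card)]
  rw [Finset.card_univ, Fintype.card_fin]
  refine Finset.sum_congr rfl (fun j _ => ?_)
  rw [Finset.sum_powersetCard j (Finset.univ : Finset (Fin m)) (fun k => NL n k)]
  rw [Finset.card_univ, Fintype.card_fin, smul_eq_mul]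

lemma dB_eq_NL (n m : ℕ) : dB n m = NL n m := by
  rw [dB, ← Nat.card_coe_set_eq, NL]
  exact Nat.card_congr (mainEquiv n m)

lemma coeffsum (n m : ℕ) :
    ∑ j ∈ Finset.range (m+1), (m.choose j : ℚ) *
      (PowerSeries.coeff (R := ℚ) n) (exp ℚ * (rescale (2:ℚ) (exp ℚ) - 1)^j)
    = (2*m+1:ℚ)^n / n.factorial := by
  have hA : exp ℚ * (rescale (2:ℚ) (exp ℚ))^m = rescale (2*m+1 : ℚ) (exp ℚ) := by
    rw [← map_pow, exp_pow_eq_rescale_exp, rescale_rescale]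
    calc exp ℚ * rescale ((m:ℚ)*2) (exp ℚ)
        = rescale 1 (exp ℚ) * rescale ((m:ℚ)*2) (exp ℚ) := by rw [rescale_one]; rfl
      _ = rescale (2*m+1:ℚ) (exp ℚ) := by rw [exp_mul_exp_eq_exp_add]; ring_nf
  have key : (∑ j ∈ Finset.range (m+1),
      (exp ℚ * (rescale (2:ℚ) (exp ℚ) - 1)^j) * ((m.choose j : ℕ) : ℚ⟦X⟧))
      = rescale (2*m+1:ℚ) (exp ℚ) := by
    rw [← hA]
    have h2 := add_pow (rescale (2:ℚ) (exp ℚ) - 1) 1 m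
    simp only [sub_add_cancel, one_pow, mul_one] at h2
    rw [h2, Finset.mul_sum]
    exact Finset.sum_congr rfl (fun j _ => by ring)
  have hkey := congrArg (PowerSeries.coeff (R := ℚ) n) key
  rw [map_sum] at hkey
  have hc : ∀ j ∈ Finset.range (m+1),
      (PowerSeries.coeff (R := ℚ) n) ((exp ℚ * (rescale (2:ℚ) (exp ℚ) - 1)^j) * ((m.choose j : ℕ) : ℚ⟦X⟧))
      = (m.choose j : ℚ) * (PowerSeries.coeff (R := ℚ) n) (exp ℚ * (rescale (2:ℚ) (exp ℚ) - 1)^j) := by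
    intro j _
    rw [show ((m.choose j : ℕ) : ℚ⟦X⟧) = PowerSeries.C ((m.choose j : ℕ) : ℚ) by
      simp, coeff_mul_C, mul_comm]
  rw [Finset.sum_congr rfl hc] at hkey
  rw [hkey, coeff_rescale, coeff_exp]
  simp [div_eq_mul_inv]

/-- `d_m(n)/n!` is the coefficient of `x^n` in the formal power series
`exp(x)·(exp(2x) - 1)^m ∈ ℚ⟦x⟧`. -/
theorem stmt6 (n m : ℕ) (hn : 1 ≤ n) :
    (PowerSeries.coeff (R := ℚ) n)
        (PowerSeries.exp ℚ * (PowerSeries.rescale (2 : ℚ) (PowerSeries.exp ℚ) - 1) ^ m)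
      = (dB n m : ℚ) / n.factorial := by
  induction m using Nat.strong_induction_on with
  | _ m IH =>
    have hfac : (n.factorial : ℚ) ≠ 0 := Nat.cast_ne_zero.2 n.factorial_ne_zero
    have hsC := coeffsum n m
    rw [Finset.sum_range_succ, Nat.choose_self, Nat.cast_one, one_mul] at hsC
    have hre : ∀ j ∈ Finset.range m, (m.choose j : ℚ) *
        (PowerSeries.coeff (R := ℚ) n) (exp ℚ * (rescale (2:ℚ) (exp ℚ) - 1)^j)
        = ((m.choose j : ℚ) * (dB n j : ℚ)) / n.factorial := by
      intro j hj
      rw [IH j (Finset.mem_range.1 hj), mul_div_assoc]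
    rw [Finset.sum_congr rfl hre, ← Finset.sum_div] at hsC
    have hN : (∑ j ∈ Finset.range m, (m.choose j : ℚ) * (dB n j : ℚ)) + (dB n m : ℚ)
        = (2*(m:ℚ)+1)^n := by
      have h' : ∑ j ∈ Finset.range (m+1), m.choose j * dB n j = (2*m+1)^n := by
        rw [Finset.sum_congr rfl (fun j _ => by rw [dB_eq_NL])]
        exact sumNL n m
      rw [Finset.sum_range_succ, Nat.choose_self, one_mul] at h'
      have h'' := congrArg (Nat.cast : ℕ → ℚ) h'
      push_cast at h''
      exact h''
    field_simp at hsC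
    rw [eq_div_iff hfac]
    linear_combination hsC - hN
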